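/- For every a > 0 there exist constants C₁ > 0 and C₂ > 0, depending only on a, such that for all x > 0 one has ∑_{n=0}^∞ xⁿ / (n!)^a ≤ C₁ · exp( C₂ · x^{1/a} ). -/

import Mathlib

private lemma exp_tsum (y : ℝ) : Real.exp y = ∑' n : ℕ, y ^ n / (Nat.factorial n : ℝ) := by
  rw [Real.exp_eq_exp_ℝ, NormedSpace.exp_eq_tsum_div]

private lemma term_le_exp (y : ℝ) (n : ℕ) (hy : 0 ≤ y) :
    y ^ n / (Nat.factorial n : ℝ) ≤ Real.exp y := by
  rw [exp_tsum y]
  exact Summable.le_tsum (Real.summable_pow_div_factorial y) n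
    (fun m _ => by positivity)

private lemma pow_rpow_swap {y : ℝ} (hy : 0 ≤ y) (a : ℝ) (n : ℕ) :
    (y ^ n) ^ a = (y ^ a) ^ n := by
  rw [← Real.rpow_natCast y n, ← Real.rpow_mul hy, mul_comm, Real.rpow_mul hy,
    Real.rpow_natCast]

theorem stmt_3 (a : ℝ) (ha : 0 < a) :
    ∃ C₁ C₂ : ℝ, 0 < C₁ ∧ 0 < C₂ ∧ ∀ x : ℝ, 0 < x →
      (∑' n : ℕ, x ^ n / (Nat.factorial n : ℝ) ^ a) ≤ C₁ * Real.exp (C₂ * x ^ (1 / a)) := by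
  rcases le_or_gt 1 a with h1 | h1
  · -- a ≥ 1 : C₁ = 1, C₂ = a
    refine ⟨1, a, one_pos, ha, ?_⟩
    intro x hx
    rw [one_mul]
    set y := x ^ (1 / a) with hy
    have hy0 : 0 < y := Real.rpow_pos_of_pos hx _
    have hya : y ^ a = x := by
      rw [hy, ← Real.rpow_mul hx.le, one_div_mul_cancel ha.ne', Real.rpow_one]
    have key : ∀ n : ℕ, x ^ n / (Nat.factorial n : ℝ) ^ a
        = (y ^ n / (Nat.factorial n : ℝ)) ^ a := by
      intro n
      have hfn : (0:ℝ) < (Nat.factorial n : ℝ) := by positivity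
      rw [Real.div_rpow (by positivity) hfn.le, pow_rpow_swap hy0.le, hya]
    have bound : ∀ n : ℕ, (y ^ n / (Nat.factorial n : ℝ)) ^ a
        ≤ (y ^ n / (Nat.factorial n : ℝ)) * Real.exp ((a - 1) * y) := by
      intro n
      set t := y ^ n / (Nat.factorial n : ℝ) with htdef
      have ht : 0 < t := by positivity
      have h2 : t ≤ Real.exp y := term_le_exp y n hy0.le
      have ha1 : (0:ℝ) ≤ a - 1 := by linarith
      calc t ^ a = t ^ ((1:ℝ) + (a - 1)) := by norm_num
        _ = t * t ^ (a - 1) := by rw [Real.rpow_add ht, Real.rpow_one]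
        _ ≤ t * (Real.exp y) ^ (a - 1) :=
            mul_le_mul_of_nonneg_left (Real.rpow_le_rpow ht.le h2 ha1) ht.le
        _ = t * Real.exp ((a - 1) * y) := by rw [mul_comm (a-1) y, Real.exp_mul]
    have hsumR : Summable (fun n : ℕ => (y ^ n / (Nat.factorial n : ℝ)) * Real.exp ((a - 1) * y)) :=
      (Real.summable_pow_div_factorial y).mul_right _
    have hsumL : Summable (fun n : ℕ => x ^ n / (Nat.factorial n : ℝ) ^ a) := by
      refine Summable.of_nonneg_of_le (fun n => by positivity) (fun n => ?_) hsumR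
      rw [key n]; exact bound n
    calc (∑' n : ℕ, x ^ n / (Nat.factorial n : ℝ) ^ a)
        ≤ ∑' n : ℕ, (y ^ n / (Nat.factorial n : ℝ)) * Real.exp ((a - 1) * y) := by
          refine Summable.tsum_le_tsum (fun n => ?_) hsumL hsumR
          rw [key n]; exact bound n
      _ = Real.exp y * Real.exp ((a - 1) * y) := by
          rw [tsum_mul_right, ← exp_tsum]
      _ = Real.exp (a * y) := by rw [← Real.exp_add]; ring_nf
  · -- a < 1 : C₁ = 3, C₂ = 2 ^ (1/a)
    refine ⟨3, (2:ℝ) ^ (1/a), by norm_num, Real.rpow_pos_of_pos two_pos _, ?_⟩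
    intro x hx
    set z := (2 * x) ^ (1 / a) with hz
    have h2x : (0:ℝ) < 2 * x := by linarith
    have hz0 : 0 < z := Real.rpow_pos_of_pos h2x _
    have hCx : (2:ℝ) ^ (1/a) * x ^ (1/a) = z := by
      rw [hz, Real.mul_rpow (by norm_num) hx.le]
    rw [hCx]
    have hza : z ^ a = 2 * x := by
      rw [hz, ← Real.rpow_mul h2x.le, one_div_mul_cancel ha.ne', Real.rpow_one]
    have key : ∀ n : ℕ, x ^ n / (Nat.factorial n : ℝ) ^ a
        = (1/2) ^ n * (z ^ n / (Nat.factorial n : ℝ)) ^ a := by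
      intro n
      have hfn : (0:ℝ) < (Nat.factorial n : ℝ) := by positivity
      rw [Real.div_rpow (by positivity) hfn.le, pow_rpow_swap hz0.le, hza, mul_pow]
      field_simp
      rw [← mul_pow]; norm_num
    have bound : ∀ n : ℕ, (z ^ n / (Nat.factorial n : ℝ)) ^ a
        ≤ 1 + z ^ n / (Nat.factorial n : ℝ) := by
      intro n
      set t := z ^ n / (Nat.factorial n : ℝ) with htdef
      have ht : 0 < t := by positivity
      rcases le_or_gt t 1 with h | h
      · have : t ^ a ≤ 1 := Real.rpow_le_one ht.le h ha.le
        linarith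
      · have : t ^ a ≤ t ^ (1:ℝ) :=
          Real.rpow_le_rpow_of_exponent_le h.le h1.le
        rw [Real.rpow_one] at this
        linarith
    have keyle : ∀ n : ℕ, x ^ n / (Nat.factorial n : ℝ) ^ a
        ≤ (1/2) ^ n + (z/2) ^ n / (Nat.factorial n : ℝ) := by
      intro n
      rw [key n]
      have h2 : ((1:ℝ)/2) ^ n * (z ^ n / (Nat.factorial n : ℝ)) ^ a
          ≤ (1/2) ^ n * (1 + z ^ n / (Nat.factorial n : ℝ)) :=
        mul_le_mul_of_nonneg_left (bound n) (by positivity)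
      refine h2.trans (le_of_eq ?_)
      rw [mul_add, mul_one]
      congr 1
      rw [div_pow, div_pow, one_pow]
      ring
    have hsumR : Summable (fun n : ℕ => ((1:ℝ)/2) ^ n + (z/2) ^ n / (Nat.factorial n : ℝ)) :=
      (summable_geometric_of_lt_one (by norm_num) (by norm_num)).add
        (Real.summable_pow_div_factorial (z/2))
    have hsumL : Summable (fun n : ℕ => x ^ n / (Nat.factorial n : ℝ) ^ a) :=
      Summable.of_nonneg_of_le (fun n => by positivity) keyle hsumR
    calc (∑' n : ℕ, x ^ n / (Nat.factorial n : ℝ) ^ a)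
        ≤ ∑' n : ℕ, (((1:ℝ)/2) ^ n + (z/2) ^ n / (Nat.factorial n : ℝ)) :=
          Summable.tsum_le_tsum keyle hsumL hsumR
      _ = (∑' n : ℕ, ((1:ℝ)/2) ^ n) + ∑' n : ℕ, (z/2) ^ n / (Nat.factorial n : ℝ) :=
          Summable.tsum_add (summable_geometric_of_lt_one (by norm_num) (by norm_num))
            (Real.summable_pow_div_factorial (z/2))
      _ = 2 + Real.exp (z/2) := by
          rw [tsum_geometric_of_lt_one (by norm_num) (by norm_num), ← exp_tsum]
          norm_num
      _ ≤ 3 * Real.exp z := by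
          have h1' : (2:ℝ) ≤ 2 * Real.exp z := by
            nlinarith [Real.one_le_exp hz0.le]
          have h2' : Real.exp (z/2) ≤ Real.exp z := by
            apply Real.exp_le_exp.mpr; linarith
          linarith
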